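/- Let d ≥ 1 and let α, β be d × d complex matrices such that γ := β − α is symmetric. Let f, g : ℝ^d → ℂ be smooth and ℤ^d-periodic. Then for every integer N ≥ 0, Σ_{a+b=N, a,b≥0} (1/(2^a · a!)) ∂_γ^a (C_b^α(f,g)) = Σ_{a+b+c=N, a,b,c≥0} (1/(2^b · b!)) (1/(2^c · c!)) C_a^β(∂_γ^b f, ∂_γ^c g). (This is the order-N coefficient in ℏ of the identity e^{(ℏ/2)∂_γ}(f ⋆_α g) = (e^{(ℏ/2)∂_γ} f) ⋆_β (e^{(ℏ/2)∂_γ} g), i.e. e^{(ℏ/2)∂_γ} is an isomorphism from ⋆_α to ⋆_β.) -/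

import Mathlib

open scoped Real

noncomputable section

/-- `ℤ^d`-periodicity of a function on `ℝ^d`. -/
def IsPeriodic (d : ℕ) (f : (Fin d → ℝ) → ℂ) : Prop :=
  ∀ (u : Fin d → ℝ) (a : Fin d → ℤ), f (u + fun i => (a i : ℝ)) = f u

/-- Partial derivative `∂/∂u^i`. -/
def pd (d : ℕ) (i : Fin d) (f : (Fin d → ℝ) → ℂ) : (Fin d → ℝ) → ℂ :=
  fun u => fderiv ℝ f u (Pi.single i (1:ℝ))

/-- Iterated derivative `∂^j/∂u^{a_1}⋯∂u^{a_j}` along a list of indices. -/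
def dAlong (d : ℕ) (l : List (Fin d)) (f : (Fin d → ℝ) → ℂ) : (Fin d → ℝ) → ℂ :=
  l.foldr (pd d) f

/-- `C_j^α(f,g) = (1/j!) Σ_{a,b} α_{a_1 b_1}⋯α_{a_j b_j}
(∂^j f/∂u^{a_1}⋯∂u^{a_j})(∂^j g/∂u^{b_1}⋯∂u^{b_j})`, the `j`-th coefficient of the
product `f ⋆_α g = Mult ∘ e^{ℏα}(f ⊗ g)`. -/
def CA (d j : ℕ) (α : Matrix (Fin d) (Fin d) ℂ) (f g : (Fin d → ℝ) → ℂ) :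
    (Fin d → ℝ) → ℂ :=
  fun u => (1 / (Nat.factorial j : ℂ)) *
    ∑ a : Fin j → Fin d, ∑ b : Fin j → Fin d,
      (∏ l, α (a l) (b l)) * (dAlong d (List.ofFn a) f u * dAlong d (List.ofFn b) g u)

/-- The second-order operator `∂_γ = Σ_{a,b} γ_{ab} ∂²/∂u^a ∂u^b`. -/
def dG (d : ℕ) (γ : Matrix (Fin d) (Fin d) ℂ) (f : (Fin d → ℝ) → ℂ) :
    (Fin d → ℝ) → ℂ :=
  fun u => ∑ a, ∑ b, γ a b * pd d a (pd d b f) u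

namespace S15
variable {d : ℕ}

abbrev Sm (f : (Fin d → ℝ) → ℂ) : Prop := ContDiff ℝ (⊤:ℕ∞) f

lemma Sm.pd {f : (Fin d → ℝ) → ℂ} (hf : Sm f) (i : Fin d) : Sm (pd d i f) :=
  (hf.fderiv_right (by simp)).clm_apply contDiff_const

lemma Sm.diff {f : (Fin d → ℝ) → ℂ} (hf : Sm f) : Differentiable ℝ f :=
  hf.differentiable (by simp)

lemma pd_comm {f : (Fin d → ℝ) → ℂ} (hf : Sm f) (i j : Fin d) :
    pd d i (pd d j f) = pd d j (pd d i f) := by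
  funext u
  have hdf : ContDiff ℝ (⊤:ℕ∞) (fderiv ℝ f) := hf.fderiv_right (by simp)
  have h1 : ∀ (v w : Fin d → ℝ) (x : Fin d → ℝ),
      fderiv ℝ (fun y => fderiv ℝ f y v) x w = fderiv ℝ (fderiv ℝ f) x w v := by
    intro v w x
    have := fderiv_clm_apply (hdf.differentiable (by simp) x)
      (differentiableAt_const v)
    rw [this]
    simp
  have hsymm := hf.contDiffAt.isSymmSndFDerivAt (x := u)
    (by rw [show ((2:WithTop ℕ∞)) = ((2:ℕ∞) : WithTop ℕ∞) by rfl]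
        simp only [minSmoothness_of_isRCLikeNormedField]
        exact WithTop.coe_le_coe.mpr le_top)
  show fderiv ℝ (pd d j f) u (Pi.single i 1) = fderiv ℝ (pd d i f) u (Pi.single j 1)
  unfold _root_.pd
  rw [h1, h1]
  exact hsymm _ _

lemma pd_add {F G : (Fin d → ℝ) → ℂ} (hF : Differentiable ℝ F) (hG : Differentiable ℝ G)
    (i : Fin d) : pd d i (F + G) = pd d i F + pd d i G := by
  funext u
  show fderiv ℝ (fun y => F y + G y) u _ = _
  rw [fderiv_fun_add (hF u) (hG u)]
  rfl

lemma pd_smul {F : (Fin d → ℝ) → ℂ} (hF : Differentiable ℝ F) (c : ℂ) (i : Fin d) :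
    pd d i (c • F) = c • pd d i F := by
  funext u
  show fderiv ℝ (fun y => c • F y) u _ = _
  rw [fderiv_fun_const_smul (hF u)]
  rfl

lemma pd_mul {F G : (Fin d → ℝ) → ℂ} (hF : Differentiable ℝ F) (hG : Differentiable ℝ G)
    (i : Fin d) : pd d i (F * G) = pd d i F * G + F * pd d i G := by
  funext u
  show fderiv ℝ (fun y => F y * G y) u _ = _
  rw [fderiv_fun_mul (hF u) (hG u)]
  simp [pd, smul_eq_mul]
  ring


lemma dAlong_nil (f : (Fin d → ℝ) → ℂ) : dAlong d [] f = f := rfl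
lemma dAlong_cons (i : Fin d) (l : List (Fin d)) (f : (Fin d → ℝ) → ℂ) :
    dAlong d (i :: l) f = pd d i (dAlong d l f) := rfl

lemma Sm.dAlong {f : (Fin d → ℝ) → ℂ} (hf : Sm f) (l : List (Fin d)) :
    Sm (dAlong d l f) := by
  induction l with
  | nil => exact hf
  | cons i l ih => exact ih.pd i

lemma dAlong_perm {f : (Fin d → ℝ) → ℂ} (hf : Sm f) {l l' : List (Fin d)}
    (h : l.Perm l') : dAlong d l f = dAlong d l' f := by
  induction h with
  | nil => rfl
  | cons x _ ih => rw [dAlong_cons, dAlong_cons, ih]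
  | swap x y l =>
      rw [dAlong_cons, dAlong_cons, dAlong_cons, dAlong_cons, pd_comm (hf.dAlong l)]
  | trans _ _ ih1 ih2 => rw [ih1, ih2]

/-- Derivative along a multiset of indices. -/
def mAlong (s : Multiset (Fin d)) (f : (Fin d → ℝ) → ℂ) : (Fin d → ℝ) → ℂ :=
  dAlong d s.toList f

lemma mAlong_zero (f : (Fin d → ℝ) → ℂ) : mAlong 0 f = f := by
  simp [mAlong, dAlong_nil]

lemma mAlong_coe {f : (Fin d → ℝ) → ℂ} (hf : Sm f) (l : List (Fin d)) :
    mAlong (↑l) f = dAlong d l f := by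
  apply dAlong_perm hf
  rw [← Multiset.coe_eq_coe, Multiset.coe_toList]

lemma mAlong_cons {f : (Fin d → ℝ) → ℂ} (hf : Sm f) (i : Fin d) (s : Multiset (Fin d)) :
    mAlong (i ::ₘ s) f = pd d i (mAlong s f) := by
  unfold mAlong
  rw [show (i ::ₘ s).toList = ((i ::ₘ s).toList : List (Fin d)) from rfl]
  have h1 : dAlong d (i ::ₘ s).toList f = dAlong d (i :: s.toList) f := by
    apply dAlong_perm hf
    rw [← Multiset.coe_eq_coe, Multiset.coe_toList]
    rw [← Multiset.cons_coe, Multiset.coe_toList]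
  rw [h1, dAlong_cons]

lemma Sm.mAlong {f : (Fin d → ℝ) → ℂ} (hf : Sm f) (s : Multiset (Fin d)) :
    Sm (S15.mAlong s f) := hf.dAlong _


lemma sum_sum_comm {ι κ : Type*} [Fintype ι] [Fintype κ] {M : Type*} [AddCommMonoid M]
    (F : ι → ι → κ → κ → M) :
    (∑ a, ∑ b, ∑ x, ∑ y, F a b x y) = ∑ x, ∑ y, ∑ a, ∑ b, F a b x y := by
  have l : (∑ p : ι × ι × κ × κ, F p.1 p.2.1 p.2.2.1 p.2.2.2)
      = ∑ a, ∑ b, ∑ x, ∑ y, F a b x y := by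
    simp only [Fintype.sum_prod_type]
  have r : (∑ q : κ × κ × ι × ι, F q.2.2.1 q.2.2.2 q.1 q.2.1)
      = ∑ x, ∑ y, ∑ a, ∑ b, F a b x y := by
    simp only [Fintype.sum_prod_type]
  rw [← l, ← r]
  exact Fintype.sum_bijective (fun p : ι × ι × κ × κ => (p.2.2.1, p.2.2.2, p.1, p.2.1))
    (Equiv.mk (fun p : ι × ι × κ × κ => ((p.2.2.1, p.2.2.2, p.1, p.2.1) : κ × κ × ι × ι))
      (fun q => (q.2.2.1, q.2.2.2, q.1, q.2.1)) (fun _ => rfl) (fun _ => rfl)).bijective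
    _ _ (fun p => rfl)

abbrev W (d : ℕ) := Multiset (Fin d) →₀ ℂ
abbrev V (d : ℕ) := (Multiset (Fin d) × Multiset (Fin d)) →₀ ℂ

/-- Linear operator from action on basis elements. -/
def mkOp {ι κ : Type*} (step : ι → (κ →₀ ℂ)) : (ι →₀ ℂ) →ₗ[ℂ] (κ →₀ ℂ) :=
  Finsupp.lsum ℂ fun p => LinearMap.toSpanSingleton ℂ _ (step p)

@[simp] lemma mkOp_single {ι κ : Type*} (step : ι → (κ →₀ ℂ)) (p : ι) (c : ℂ) :
    mkOp step (Finsupp.single p c) = c • step p := by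
  simp [mkOp, LinearMap.toSpanSingleton_apply]

def opP (m : Matrix (Fin d) (Fin d) ℂ) : V d →ₗ[ℂ] V d :=
  mkOp fun p => ∑ a, ∑ b, Finsupp.single (a ::ₘ p.1, b ::ₘ p.2) (m a b)

def opF (m : Matrix (Fin d) (Fin d) ℂ) : V d →ₗ[ℂ] V d :=
  mkOp fun p => ∑ a, ∑ b, Finsupp.single (a ::ₘ b ::ₘ p.1, p.2) (m a b)

def opG (m : Matrix (Fin d) (Fin d) ℂ) : V d →ₗ[ℂ] V d :=
  mkOp fun p => ∑ a, ∑ b, Finsupp.single (p.1, a ::ₘ b ::ₘ p.2) (m a b)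

def opD (m : Matrix (Fin d) (Fin d) ℂ) : W d →ₗ[ℂ] W d :=
  mkOp fun s => ∑ a, ∑ b, Finsupp.single (a ::ₘ b ::ₘ s) (m a b)

def di (i : Fin d) : V d →ₗ[ℂ] V d :=
  mkOp fun p => Finsupp.single (i ::ₘ p.1, p.2) (1:ℂ) + Finsupp.single (p.1, i ::ₘ p.2) (1:ℂ)

def diW (i : Fin d) : W d →ₗ[ℂ] W d :=
  mkOp fun s => Finsupp.single (i ::ₘ s) (1:ℂ)

def cmb : W d →ₗ[ℂ] W d →ₗ[ℂ] V d :=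
  Finsupp.lsum ℂ fun s => LinearMap.toSpanSingleton ℂ _ (mkOp fun t => Finsupp.single (s, t) (1:ℂ))

@[simp] lemma cmb_single_single (s t : Multiset (Fin d)) (c e : ℂ) :
    cmb (Finsupp.single s c) (Finsupp.single t e) = Finsupp.single (s, t) (c * e) := by
  simp [cmb, LinearMap.toSpanSingleton_apply, mul_comm, Finsupp.smul_single, smul_smul]

lemma cons_rot (a c e : Fin d) (s : Multiset (Fin d)) :
    c ::ₘ e ::ₘ a ::ₘ s = a ::ₘ c ::ₘ e ::ₘ s := by
  rw [Multiset.cons_swap e a, Multiset.cons_swap c a]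

lemma commute_opF_opP (m m' : Matrix (Fin d) (Fin d) ℂ) :
    Commute (opF m) (opP m') := by
  unfold Commute SemiconjBy
  apply Finsupp.lhom_ext
  rintro ⟨s, t⟩ c
  rw [Module.End.mul_apply, Module.End.mul_apply]
  simp only [opF, opP, mkOp_single, map_smul, map_sum, Finsupp.smul_single, smul_eq_mul,
    Finset.smul_sum]
  refine (sum_sum_comm (fun a' b' a b =>
    Finsupp.single (a ::ₘ b ::ₘ a' ::ₘ s, b' ::ₘ t) (c * m' a' b' * m a b))).trans ?_
  refine Finset.sum_congr rfl fun a _ => Finset.sum_congr rfl fun b _ =>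
    Finset.sum_congr rfl fun a' _ => Finset.sum_congr rfl fun b' _ => ?_
  rw [cons_rot]
  congr 1
  ring

lemma commute_opG_opP (m m' : Matrix (Fin d) (Fin d) ℂ) :
    Commute (opG m) (opP m') := by
  unfold Commute SemiconjBy
  apply Finsupp.lhom_ext
  rintro ⟨s, t⟩ c
  rw [Module.End.mul_apply, Module.End.mul_apply]
  simp only [opG, opP, mkOp_single, map_smul, map_sum, Finsupp.smul_single, smul_eq_mul,
    Finset.smul_sum]
  refine (sum_sum_comm (fun a' b' a b =>
    Finsupp.single (a' ::ₘ s, a ::ₘ b ::ₘ b' ::ₘ t) (c * m' a' b' * m a b))).trans ?_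
  refine Finset.sum_congr rfl fun a _ => Finset.sum_congr rfl fun b _ =>
    Finset.sum_congr rfl fun a' _ => Finset.sum_congr rfl fun b' _ => ?_
  rw [cons_rot]
  congr 1
  ring

lemma commute_opF_opG (m m' : Matrix (Fin d) (Fin d) ℂ) :
    Commute (opF m) (opG m') := by
  unfold Commute SemiconjBy
  apply Finsupp.lhom_ext
  rintro ⟨s, t⟩ c
  rw [Module.End.mul_apply, Module.End.mul_apply]
  simp only [opG, opF, mkOp_single, map_smul, map_sum, Finsupp.smul_single, smul_eq_mul,
    Finset.smul_sum]
  refine (sum_sum_comm (fun a' b' a b =>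
    Finsupp.single (a ::ₘ b ::ₘ s, a' ::ₘ b' ::ₘ t) (c * m' a' b' * m a b))).trans ?_
  refine Finset.sum_congr rfl fun a _ => Finset.sum_congr rfl fun b _ =>
    Finset.sum_congr rfl fun a' _ => Finset.sum_congr rfl fun b' _ => ?_
  congr 1
  ring

lemma commute_opP_opP (m m' : Matrix (Fin d) (Fin d) ℂ) :
    Commute (opP m) (opP m') := by
  unfold Commute SemiconjBy
  apply Finsupp.lhom_ext
  rintro ⟨s, t⟩ c
  rw [Module.End.mul_apply, Module.End.mul_apply]
  simp only [opP, mkOp_single, map_smul, map_sum, Finsupp.smul_single, smul_eq_mul,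
    Finset.smul_sum]
  refine (sum_sum_comm (fun a' b' a b =>
    Finsupp.single (a ::ₘ a' ::ₘ s, b ::ₘ b' ::ₘ t) (c * m' a' b' * m a b))).trans ?_
  refine Finset.sum_congr rfl fun a _ => Finset.sum_congr rfl fun b _ =>
    Finset.sum_congr rfl fun a' _ => Finset.sum_congr rfl fun b' _ => ?_
  rw [Multiset.cons_swap a a', Multiset.cons_swap b b']
  congr 1
  ring

lemma opP_add (m m' : Matrix (Fin d) (Fin d) ℂ) : opP (d := d) (m + m') = opP m + opP m' := by
  apply Finsupp.lhom_ext
  rintro ⟨s, t⟩ c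
  simp only [opP, mkOp_single, LinearMap.add_apply, ← smul_add, ← Finset.sum_add_distrib]
  congr 1
  refine Finset.sum_congr rfl fun a _ => Finset.sum_congr rfl fun b _ => ?_
  rw [Matrix.add_apply, Finsupp.single_add]

lemma di_di_single (a b : Fin d) (s t : Multiset (Fin d)) (c : ℂ) :
    di a (di b (Finsupp.single (s, t) c))
      = Finsupp.single (a ::ₘ b ::ₘ s, t) c
        + (Finsupp.single (b ::ₘ s, a ::ₘ t) c
        + (Finsupp.single (a ::ₘ s, b ::ₘ t) c
        + Finsupp.single (s, a ::ₘ b ::ₘ t) c)) := by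
  simp only [di, mkOp_single, map_smul, map_add, smul_add, Finsupp.smul_single, smul_eq_mul,
    mul_one]
  abel

lemma di_di_sum (m : Matrix (Fin d) (Fin d) ℂ) (hm : m.IsSymm) :
    (∑ a, ∑ b, m a b • (di a ∘ₗ di (d := d) b)) = opF m + opG m + (2:ℂ) • opP m := by
  apply Finsupp.lhom_ext
  rintro ⟨s, t⟩ c
  have hL : (∑ a, ∑ b, m a b • (di a ∘ₗ di (d := d) b)) (Finsupp.single (s, t) c)
      = (∑ a, ∑ b, (Finsupp.single (a ::ₘ b ::ₘ s, t) (m a b * c)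
          + (Finsupp.single (b ::ₘ s, a ::ₘ t) (m a b * c)
          + (Finsupp.single (a ::ₘ s, b ::ₘ t) (m a b * c)
          + Finsupp.single (s, a ::ₘ b ::ₘ t) (m a b * c))))) := by
    rw [LinearMap.sum_apply]
    refine Finset.sum_congr rfl fun a _ => ?_
    rw [LinearMap.sum_apply]
    refine Finset.sum_congr rfl fun b _ => ?_
    rw [LinearMap.smul_apply, LinearMap.comp_apply, di_di_single]
    simp only [smul_add, Finsupp.smul_single, smul_eq_mul]
  rw [hL]
  simp only [Finset.sum_add_distrib]
  have hS2 : (∑ a, ∑ b, Finsupp.single ((b ::ₘ s : Multiset (Fin d)), a ::ₘ t) (m a b * c))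
      = ∑ a, ∑ b, Finsupp.single ((a ::ₘ s : Multiset (Fin d)), b ::ₘ t) (m a b * c) := by
    rw [Finset.sum_comm]
    exact Finset.sum_congr rfl fun a _ => Finset.sum_congr rfl fun b _ => by
      rw [hm.apply]
  rw [hS2]
  have hR : (opF m + opG m + (2:ℂ) • opP m) (Finsupp.single (s, t) c)
      = ((∑ a, ∑ b, Finsupp.single ((a ::ₘ b ::ₘ s : Multiset (Fin d)), t) (m a b * c))
          + (∑ a, ∑ b, Finsupp.single ((s : Multiset (Fin d)), a ::ₘ b ::ₘ t) (m a b * c)))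
        + ((∑ a, ∑ b, Finsupp.single ((a ::ₘ s : Multiset (Fin d)), b ::ₘ t) (m a b * c))
          + (∑ a, ∑ b, Finsupp.single ((a ::ₘ s : Multiset (Fin d)), b ::ₘ t) (m a b * c))) := by
    rw [LinearMap.add_apply, LinearMap.add_apply, LinearMap.smul_apply]
    congr 1
    · congr 1
      · simp only [opF, mkOp_single, Finset.smul_sum, Finsupp.smul_single, smul_eq_mul]
        exact Finset.sum_congr rfl fun a _ => Finset.sum_congr rfl fun b _ => by
          rw [mul_comm]
      · simp only [opG, mkOp_single, Finset.smul_sum, Finsupp.smul_single, smul_eq_mul]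
        exact Finset.sum_congr rfl fun a _ => Finset.sum_congr rfl fun b _ => by
          rw [mul_comm]
    · simp only [opP, mkOp_single, Finset.smul_sum, Finsupp.smul_single, smul_eq_mul,
        ← Finset.sum_add_distrib]
      refine Finset.sum_congr rfl fun a _ => Finset.sum_congr rfl fun b _ => ?_
      rw [← Finsupp.single_add]
      congr 1
      ring
  rw [hR]
  abel

lemma diW_diW_sum (m : Matrix (Fin d) (Fin d) ℂ) :
    (∑ a, ∑ b, m a b • (diW a ∘ₗ diW (d := d) b)) = opD m := by
  apply Finsupp.lhom_ext
  intro s c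
  rw [LinearMap.sum_apply]
  simp only [opD, mkOp_single, Finset.smul_sum, Finsupp.smul_single, smul_eq_mul]
  refine Finset.sum_congr rfl fun a _ => ?_
  rw [LinearMap.sum_apply]
  refine Finset.sum_congr rfl fun b _ => ?_
  rw [LinearMap.smul_apply, LinearMap.comp_apply, diW, diW]
  simp only [mkOp_single, Finsupp.smul_single, smul_eq_mul, mul_one]
  congr 1
  ring

lemma cmb_opD_left (m : Matrix (Fin d) (Fin d) ℂ) (x y : W d) :
    cmb ((opD m) x) y = opF m (cmb x y) := by
  induction x using Finsupp.induction_linear with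
  | zero => simp
  | add f g hf hg => simp only [map_add, LinearMap.add_apply, hf, hg]
  | single s c =>
    induction y using Finsupp.induction_linear with
    | zero => simp
    | add f g hf hg => simp only [map_add, hf, hg]
    | single t e =>
      simp only [opD, opF, mkOp_single, map_smul, map_sum, LinearMap.smul_apply,
        LinearMap.sum_apply, cmb_single_single, Finset.smul_sum, Finsupp.smul_single,
        smul_eq_mul]
      refine Finset.sum_congr rfl fun a _ => Finset.sum_congr rfl fun b _ => ?_
      congr 1
      ring

lemma cmb_opD_right (m : Matrix (Fin d) (Fin d) ℂ) (x y : W d) :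
    cmb x ((opD m) y) = opG m (cmb x y) := by
  induction x using Finsupp.induction_linear with
  | zero => simp
  | add f g hf hg => simp only [map_add, LinearMap.add_apply, hf, hg]
  | single s c =>
    induction y using Finsupp.induction_linear with
    | zero => simp
    | add f g hf hg => simp only [map_add, hf, hg]
    | single t e =>
      simp only [opD, opG, mkOp_single, map_smul, map_sum, LinearMap.smul_apply,
        LinearMap.sum_apply, cmb_single_single, Finset.smul_sum, Finsupp.smul_single,
        smul_eq_mul]
      refine Finset.sum_congr rfl fun a _ => Finset.sum_congr rfl fun b _ => ?_
      congr 1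
      ring

lemma opP_cmb (m : Matrix (Fin d) (Fin d) ℂ) (x y : W d) :
    opP m (cmb x y) = ∑ a, ∑ b, m a b • cmb (diW a x) (diW b y) := by
  induction x using Finsupp.induction_linear with
  | zero => simp
  | add f g hf hg =>
    simp only [map_add, LinearMap.add_apply, hf, hg, smul_add, Finset.sum_add_distrib]
  | single s c =>
    induction y using Finsupp.induction_linear with
    | zero => simp
    | add f g hf hg =>
      simp only [map_add, hf, hg, smul_add, Finset.sum_add_distrib]
    | single t e =>
      simp only [opP, diW, mkOp_single, map_smul, LinearMap.smul_apply, cmb_single_single,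
        Finset.smul_sum, Finsupp.smul_single, smul_eq_mul, mul_one, smul_smul]
      refine Finset.sum_congr rfl fun a _ => Finset.sum_congr rfl fun b _ => ?_
      congr 1
      ring

def diWL : List (Fin d) → (W d →ₗ[ℂ] W d)
  | [] => LinearMap.id
  | i :: l => diW i ∘ₗ diWL l

lemma sum_pi_succ {j : ℕ} {M : Type*} [AddCommMonoid M] (F : (Fin (j+1) → Fin d) → M) :
    (∑ a : Fin (j+1) → Fin d, F a) = ∑ a0 : Fin d, ∑ a : Fin j → Fin d, F (Fin.cons a0 a) := by
  rw [← Equiv.sum_comp (Fin.consEquiv (fun _ => Fin d)) F, Fintype.sum_prod_type]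
  rfl

lemma opP_pow_cmb (m : Matrix (Fin d) (Fin d) ℂ) (x y : W d) (j : ℕ) :
    ((opP m) ^ j) (cmb x y)
      = ∑ a : Fin j → Fin d, ∑ b : Fin j → Fin d,
          (∏ l, m (a l) (b l)) • cmb (diWL (List.ofFn a) x) (diWL (List.ofFn b) y) := by
  induction j with
  | zero =>
    rw [pow_zero]
    rw [Fintype.sum_unique fun a : Fin 0 → Fin d => ∑ b : Fin 0 → Fin d,
      (∏ l, m (a l) (b l)) • cmb (diWL (List.ofFn a) x) (diWL (List.ofFn b) y)]
    rw [Fintype.sum_unique]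
    simp [diWL]
  | succ j ih =>
    rw [pow_succ', Module.End.mul_apply, ih, map_sum]
    have lhs_eq : ∑ a : Fin j → Fin d, (opP m) (∑ b : Fin j → Fin d,
          (∏ l, m (a l) (b l)) • cmb (diWL (List.ofFn a) x) (diWL (List.ofFn b) y))
        = ∑ a : Fin j → Fin d, ∑ b : Fin j → Fin d, ∑ a0 : Fin d, ∑ b0 : Fin d,
            ((∏ l, m (a l) (b l)) * m a0 b0) •
              cmb (diW a0 (diWL (List.ofFn a) x)) (diW b0 (diWL (List.ofFn b) y)) := by
      refine Finset.sum_congr rfl fun a _ => ?_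
      rw [map_sum]
      refine Finset.sum_congr rfl fun b _ => ?_
      rw [map_smul, opP_cmb, Finset.smul_sum]
      refine Finset.sum_congr rfl fun a0 _ => ?_
      rw [Finset.smul_sum]
      refine Finset.sum_congr rfl fun b0 _ => ?_
      rw [smul_smul]
    rw [lhs_eq]
    rw [sum_sum_comm (fun a b a0 b0 =>
      ((∏ l, m (a l) (b l)) * m a0 b0) •
        cmb (diW a0 (diWL (List.ofFn a) x)) (diW b0 (diWL (List.ofFn b) y)))]
    rw [sum_pi_succ (fun a : Fin (j+1) → Fin d => ∑ b : Fin (j+1) → Fin d,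
      (∏ l, m (a l) (b l)) • cmb (diWL (List.ofFn a) x) (diWL (List.ofFn b) y))]
    refine Finset.sum_congr rfl fun a0 _ => ?_
    rw [Finset.sum_comm]
    refine Finset.sum_congr rfl fun a _ => ?_
    rw [sum_pi_succ (fun b : Fin (j+1) → Fin d =>
      (∏ l, m ((Fin.cons a0 a : Fin (j+1) → Fin d) l) (b l)) •
        cmb (diWL (List.ofFn (Fin.cons a0 a : Fin (j+1) → Fin d)) x)
        (diWL (List.ofFn b) y))]
    refine Finset.sum_congr rfl fun b0 _ => Finset.sum_congr rfl fun b _ => ?_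
    have hprod : (∏ l, m ((Fin.cons a0 a : Fin (j+1) → Fin d) l)
          ((Fin.cons b0 b : Fin (j+1) → Fin d) l))
        = m a0 b0 * ∏ l, m (a l) (b l) := by
      rw [Fin.prod_univ_succ]
      simp [Fin.cons_zero, Fin.cons_succ]
    have hofn : ∀ (c0 : Fin d) (cf : Fin j → Fin d),
        diWL (d := d) (List.ofFn (Fin.cons c0 cf : Fin (j+1) → Fin d))
          = diW c0 ∘ₗ diWL (List.ofFn cf) := by
      intro c0 cf
      rw [List.ofFn_succ]
      simp only [Fin.cons_zero, Fin.cons_succ, diWL]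
    rw [hprod, hofn, hofn]
    rw [LinearMap.comp_apply, LinearMap.comp_apply]
    congr 1
    ring

lemma cmb_opD_pow (m : Matrix (Fin d) (Fin d) ℂ) (x y : W d) (b c : ℕ) :
    cmb (((opD m) ^ b) x) (((opD m) ^ c) y)
      = ((opF m) ^ b) (((opG m) ^ c) (cmb x y)) := by
  have hleft : ∀ (k : ℕ) (x y : W d), cmb (((opD m) ^ k) x) y = ((opF m) ^ k) (cmb x y) := by
    intro k
    induction k with
    | zero => intro x y; simp
    | succ k ih =>
      intro x y
      rw [pow_succ', pow_succ', Module.End.mul_apply, Module.End.mul_apply, cmb_opD_left, ih]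
  have hright : ∀ (k : ℕ) (x y : W d), cmb x (((opD m) ^ k) y) = ((opG m) ^ k) (cmb x y) := by
    intro k
    induction k with
    | zero => intro x y; simp
    | succ k ih =>
      intro x y
      rw [pow_succ', Module.End.mul_apply, cmb_opD_right, ih, ← Module.End.mul_apply, ← pow_succ']
  rw [hleft, hright]

section Eval

def evalW (f : (Fin d → ℝ) → ℂ) : W d →ₗ[ℂ] ((Fin d → ℝ) → ℂ) :=
  Finsupp.lsum ℂ fun s => LinearMap.toSpanSingleton ℂ _ (mAlong s f)

def evalV (f g : (Fin d → ℝ) → ℂ) : V d →ₗ[ℂ] ((Fin d → ℝ) → ℂ) :=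
  Finsupp.lsum ℂ fun p => LinearMap.toSpanSingleton ℂ _ (mAlong p.1 f * mAlong p.2 g)

@[simp] lemma evalW_single (f : (Fin d → ℝ) → ℂ) (s : Multiset (Fin d)) (c : ℂ) :
    evalW f (Finsupp.single s c) = c • mAlong s f := by
  simp [evalW, LinearMap.toSpanSingleton_apply]

@[simp] lemma evalV_single (f g : (Fin d → ℝ) → ℂ) (p : Multiset (Fin d) × Multiset (Fin d))
    (c : ℂ) : evalV f g (Finsupp.single p c) = c • (mAlong p.1 f * mAlong p.2 g) := by
  simp [evalV, LinearMap.toSpanSingleton_apply]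

variable {f g : (Fin d → ℝ) → ℂ}

lemma Sm.evalW (hf : Sm f) (x : W d) : Sm (S15.evalW f x) := by
  induction x using Finsupp.induction_linear with
  | zero => rw [map_zero]; exact contDiff_const (c := 0)
  | add a b ha hb => rw [map_add]; exact ha.add hb
  | single s c => rw [evalW_single]; exact (hf.mAlong s).const_smul c

lemma Sm.evalV (hf : Sm f) (hg : Sm g) (x : V d) : Sm (S15.evalV f g x) := by
  induction x using Finsupp.induction_linear with
  | zero => rw [map_zero]; exact contDiff_const (c := 0)
  | add a b ha hb => rw [map_add]; exact ha.add hb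
  | single s c =>
      rw [evalV_single]
      exact ((hf.mAlong s.1).mul (hg.mAlong s.2)).const_smul c

lemma pd_zero (i : Fin d) : pd d i (0 : (Fin d → ℝ) → ℂ) = 0 := by
  funext u
  show fderiv ℝ (fun _ => (0:ℂ)) u (Pi.single i 1) = 0
  rw [fderiv_fun_const]
  rfl

lemma pd_evalW (hf : Sm f) (i : Fin d) (x : W d) :
    pd d i (S15.evalW f x) = S15.evalW f (diW i x) := by
  induction x using Finsupp.induction_linear with
  | zero => simp [pd_zero]
  | add a b ha hb =>
      rw [map_add, map_add, pd_add (hf.evalW a).diff (hf.evalW b).diff, ha, hb, map_add]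
  | single s c =>
      rw [evalW_single, pd_smul (hf.mAlong s).diff, ← mAlong_cons hf, diW, mkOp_single]
      rw [map_smul, evalW_single, one_smul]

lemma pd_evalV (hf : Sm f) (hg : Sm g) (i : Fin d) (x : V d) :
    pd d i (S15.evalV f g x) = S15.evalV f g (di i x) := by
  induction x using Finsupp.induction_linear with
  | zero => simp [pd_zero]
  | add a b ha hb =>
      rw [map_add, map_add, pd_add (hf.evalV hg a).diff (hf.evalV hg b).diff, ha, hb, map_add]
  | single p c =>
      have hFG : Sm (mAlong p.1 f * mAlong p.2 g) := (hf.mAlong p.1).mul (hg.mAlong p.2)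
      rw [evalV_single, pd_smul hFG.diff,
        pd_mul (hf.mAlong p.1).diff (hg.mAlong p.2).diff, ← mAlong_cons hf, ← mAlong_cons hg,
        di, mkOp_single, map_smul, map_add, evalV_single, evalV_single, one_smul, one_smul,
        smul_add]

lemma dG_evalV (hf : Sm f) (hg : Sm g) (m : Matrix (Fin d) (Fin d) ℂ) (hm : m.IsSymm)
    (x : V d) :
    dG d m (S15.evalV f g x) = S15.evalV f g ((opF m + opG m + (2:ℂ) • opP m) x) := by
  rw [← di_di_sum m hm]
  funext u
  show (∑ a, ∑ b, m a b * pd d a (pd d b (S15.evalV f g x)) u) = _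
  rw [LinearMap.sum_apply, map_sum, Finset.sum_apply]
  refine Finset.sum_congr rfl fun a _ => ?_
  rw [LinearMap.sum_apply, map_sum, Finset.sum_apply]
  refine Finset.sum_congr rfl fun b _ => ?_
  rw [pd_evalV hf hg, pd_evalV hf hg, LinearMap.smul_apply, LinearMap.comp_apply, map_smul]
  rfl

lemma dG_evalW (hf : Sm f) (m : Matrix (Fin d) (Fin d) ℂ) (x : W d) :
    dG d m (S15.evalW f x) = S15.evalW f (opD m x) := by
  rw [← diW_diW_sum m]
  funext u
  show (∑ a, ∑ b, m a b * pd d a (pd d b (S15.evalW f x)) u) = _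
  rw [LinearMap.sum_apply, map_sum, Finset.sum_apply]
  refine Finset.sum_congr rfl fun a _ => ?_
  rw [LinearMap.sum_apply, map_sum, Finset.sum_apply]
  refine Finset.sum_congr rfl fun b _ => ?_
  rw [pd_evalW hf, pd_evalW hf, LinearMap.smul_apply, LinearMap.comp_apply, map_smul]
  rfl

lemma dG_iter_evalV (hf : Sm f) (hg : Sm g) (m : Matrix (Fin d) (Fin d) ℂ)
    (hm : m.IsSymm) (k : ℕ) (x : V d) :
    (dG d m)^[k] (S15.evalV f g x)
      = S15.evalV f g ((((opF m + opG m + (2:ℂ) • opP m) : Module.End ℂ (V d)) ^ k) x) := by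
  induction k with
  | zero => simp
  | succ k ih =>
      rw [Function.iterate_succ_apply', ih, dG_evalV hf hg m hm, pow_succ',
        Module.End.mul_apply]

lemma dG_iter_evalW (hf : Sm f) (m : Matrix (Fin d) (Fin d) ℂ) (k : ℕ) (x : W d) :
    (dG d m)^[k] (S15.evalW f x)
      = S15.evalW f (((opD m : Module.End ℂ (W d)) ^ k) x) := by
  induction k with
  | zero => simp
  | succ k ih =>
      rw [Function.iterate_succ_apply', ih, dG_evalW hf m, pow_succ', Module.End.mul_apply]

lemma evalV_cmb (hf : Sm f) (hg : Sm g) (x y : W d) :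
    S15.evalV f g (cmb x y) = S15.evalW f x * S15.evalW g y := by
  induction x using Finsupp.induction_linear with
  | zero => simp [zero_mul]
  | add a b ha hb => simp only [map_add, LinearMap.add_apply, ha, hb, add_mul]
  | single s c =>
      induction y using Finsupp.induction_linear with
      | zero => simp [mul_zero]
      | add a b ha hb => simp only [map_add, ha, hb, mul_add]
      | single t e =>
          rw [cmb_single_single, evalV_single, evalW_single, evalW_single]
          funext u
          simp [smul_eq_mul]
          ring

lemma dAlong_evalW (hf : Sm f) (l : List (Fin d)) (x : W d) :
    dAlong d l (S15.evalW f x) = S15.evalW f (diWL l x) := by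
  induction l with
  | nil => rfl
  | cons i l ih => rw [dAlong_cons, ih, pd_evalW hf, diWL, LinearMap.comp_apply]

lemma CA_evalW (hf : Sm f) (hg : Sm g) (j : ℕ) (m : Matrix (Fin d) (Fin d) ℂ) (x y : W d) :
    CA d j m (S15.evalW f x) (S15.evalW g y)
      = S15.evalV f g ((1 / (j.factorial : ℂ)) • (((opP m : Module.End ℂ (V d)) ^ j) (cmb x y))) := by
  funext u
  show (1 / (j.factorial : ℂ)) * ∑ a : Fin j → Fin d, ∑ b : Fin j → Fin d,
      (∏ l, m (a l) (b l)) * (dAlong d (List.ofFn a) (S15.evalW f x) u *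
        dAlong d (List.ofFn b) (S15.evalW g y) u) = _
  rw [map_smul, Pi.smul_apply, smul_eq_mul]
  congr 1
  rw [opP_pow_cmb, map_sum, Finset.sum_apply]
  refine Finset.sum_congr rfl fun a _ => ?_
  rw [map_sum, Finset.sum_apply]
  refine Finset.sum_congr rfl fun b _ => ?_
  rw [dAlong_evalW hf, dAlong_evalW hg, map_smul, Pi.smul_apply, smul_eq_mul]
  congr 1
  rw [evalV_cmb hf hg]
  rfl

end Eval

lemma Econv {R : Type*} [Ring R] [Algebra ℂ R] {X Y : R} (h : Commute X Y) (n : ℕ) :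
    ∑ ab ∈ Finset.HasAntidiagonal.antidiagonal n,
      (((ab.1.factorial : ℂ))⁻¹ * ((ab.2.factorial : ℂ))⁻¹) • (X ^ ab.1 * Y ^ ab.2)
      = ((n.factorial : ℂ))⁻¹ • (X + Y) ^ n := by
  rw [Finset.Nat.sum_antidiagonal_eq_sum_range_succ_mk, h.add_pow, Finset.smul_sum]
  refine Finset.sum_congr rfl fun k hk => ?_
  have hk' : k ≤ n := Nat.lt_succ_iff.mp (Finset.mem_range.mp hk)
  have hc : (X^k * Y^(n-k) * (n.choose k : R)) = (n.choose k : ℂ) • (X^k * Y^(n-k)) := by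
    rw [← (Nat.cast_commute (n.choose k) (X^k * Y^(n-k))).eq,
      ← map_natCast (algebraMap ℂ R), ← Algebra.smul_def]
  rw [hc, smul_smul]
  congr 1
  have h := Nat.choose_mul_factorial_mul_factorial hk'
  have h1 : (k.factorial : ℂ) ≠ 0 := Nat.cast_ne_zero.mpr (Nat.factorial_ne_zero k)
  have h2 : ((n-k).factorial : ℂ) ≠ 0 := Nat.cast_ne_zero.mpr (Nat.factorial_ne_zero _)
  have h3 : (n.factorial : ℂ) ≠ 0 := Nat.cast_ne_zero.mpr (Nat.factorial_ne_zero n)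
  field_simp
  push_cast [← h]
  ring

lemma keyAlg {R : Type*} [Ring R] [Algebra ℂ R] (A B C P : R)
    (hAB : Commute A B) (hAC : Commute A C) (hAP : Commute A P)
    (hBC : Commute B C) (hBP : Commute B P) (hCP : Commute C P) (N : ℕ) :
    ∑ ab ∈ Finset.HasAntidiagonal.antidiagonal N,
      ((1 / ((2:ℂ) ^ ab.1 * (ab.1.factorial : ℂ))) * (1 / (ab.2.factorial : ℂ))) •
        ((A + B + (2:ℂ) • C) ^ ab.1 * P ^ ab.2)
    = ∑ abc ∈ Finset.HasAntidiagonal.antidiagonal N, ∑ bc ∈ Finset.HasAntidiagonal.antidiagonal abc.2,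
        ((1 / (abc.1.factorial : ℂ)) * (1 / ((2:ℂ) ^ bc.1 * (bc.1.factorial : ℂ))) *
          (1 / ((2:ℂ) ^ bc.2 * (bc.2.factorial : ℂ)))) •
          ((P + C) ^ abc.1 * (A ^ bc.1 * B ^ bc.2)) := by
  set A' : R := (2:ℂ)⁻¹ • A with hA'
  set B' : R := (2:ℂ)⁻¹ • B with hB'
  have h2 : ((2:ℂ))⁻¹ • ((2:ℂ) • C) = C := by rw [smul_smul]; norm_num
  have hD' : (2:ℂ)⁻¹ • (A + B + (2:ℂ) • C) = A' + B' + C := by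
    rw [smul_add, smul_add, h2, hA', hB']
  have hcomm1 : Commute (A' + B' + C) P :=
    (((hAP.smul_left _).add_left (hBP.smul_left _)).add_left hCP)
  have hcomm2 : Commute A' B' := (hAB.smul_left _).smul_right _
  have hPCA : Commute (P + C) A' := (hAP.symm.add_left hAC.symm).smul_right _
  have hPCB : Commute (P + C) B' := (hBP.symm.add_left hBC.symm).smul_right _
  have hcomm3 : Commute (P + C) (A' + B') := hPCA.add_right hPCB
  have lhs_eq : ∑ ab ∈ Finset.HasAntidiagonal.antidiagonal N,
      ((1 / ((2:ℂ) ^ ab.1 * (ab.1.factorial : ℂ))) * (1 / (ab.2.factorial : ℂ))) •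
        ((A + B + (2:ℂ) • C) ^ ab.1 * P ^ ab.2)
      = ((N.factorial : ℂ))⁻¹ • ((A' + B' + C) + P) ^ N := by
    rw [← Econv hcomm1 N]
    refine Finset.sum_congr rfl fun ab _ => ?_
    rw [← hD', smul_pow, smul_mul_assoc, smul_smul]
    congr 1
    rw [one_div, one_div, mul_inv, inv_pow]
    ring
  rw [lhs_eq]
  have inner : ∀ m : ℕ, ∑ bc ∈ Finset.HasAntidiagonal.antidiagonal m,
      ((1 / ((2:ℂ) ^ bc.1 * (bc.1.factorial : ℂ))) *
        (1 / ((2:ℂ) ^ bc.2 * (bc.2.factorial : ℂ)))) • (A ^ bc.1 * B ^ bc.2)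
      = ((m.factorial : ℂ))⁻¹ • (A' + B') ^ m := by
    intro m
    rw [← Econv hcomm2 m]
    refine Finset.sum_congr rfl fun bc _ => ?_
    rw [hA', hB', smul_pow, smul_pow, smul_mul_assoc, mul_smul_comm, smul_smul, smul_smul]
    congr 1
    rw [one_div, one_div, mul_inv, mul_inv, inv_pow, inv_pow]
    ring
  have step : ∀ abc : ℕ × ℕ, ∑ bc ∈ Finset.HasAntidiagonal.antidiagonal abc.2,
      ((1 / (abc.1.factorial : ℂ)) * (1 / ((2:ℂ) ^ bc.1 * (bc.1.factorial : ℂ))) *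
        (1 / ((2:ℂ) ^ bc.2 * (bc.2.factorial : ℂ)))) •
        ((P + C) ^ abc.1 * (A ^ bc.1 * B ^ bc.2))
      = (((abc.1.factorial : ℂ))⁻¹ * ((abc.2.factorial : ℂ))⁻¹) •
          ((P + C) ^ abc.1 * (A' + B') ^ abc.2) := by
    intro abc
    have e1 : ∑ bc ∈ Finset.HasAntidiagonal.antidiagonal abc.2,
        ((1 / (abc.1.factorial : ℂ)) * (1 / ((2:ℂ) ^ bc.1 * (bc.1.factorial : ℂ))) *
          (1 / ((2:ℂ) ^ bc.2 * (bc.2.factorial : ℂ)))) •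
          ((P + C) ^ abc.1 * (A ^ bc.1 * B ^ bc.2))
        = ((abc.1.factorial : ℂ))⁻¹ • ((P + C) ^ abc.1 *
            ∑ bc ∈ Finset.HasAntidiagonal.antidiagonal abc.2,
              ((1 / ((2:ℂ) ^ bc.1 * (bc.1.factorial : ℂ))) *
                (1 / ((2:ℂ) ^ bc.2 * (bc.2.factorial : ℂ)))) • (A ^ bc.1 * B ^ bc.2)) := by
      rw [Finset.mul_sum, Finset.smul_sum]
      refine Finset.sum_congr rfl fun bc _ => ?_
      rw [mul_smul_comm, smul_smul]
      congr 1
      rw [one_div]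
      ring
    rw [e1, inner abc.2, mul_smul_comm, smul_smul]
  calc ((N.factorial : ℂ))⁻¹ • ((A' + B' + C) + P) ^ N
      = ((N.factorial : ℂ))⁻¹ • ((P + C) + (A' + B')) ^ N := by
        congr 2
        abel
    _ = ∑ abc ∈ Finset.HasAntidiagonal.antidiagonal N,
          (((abc.1.factorial : ℂ))⁻¹ * ((abc.2.factorial : ℂ))⁻¹) •
            ((P + C) ^ abc.1 * (A' + B') ^ abc.2) := (Econv hcomm3 N).symm
    _ = _ := by
        exact Finset.sum_congr rfl fun abc _ => (step abc).symm

end S15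



open S15 in
/-- Order-`N` coefficient in `ℏ` of the identity
`e^{(ℏ/2)∂_γ}(f ⋆_α g) = (e^{(ℏ/2)∂_γ} f) ⋆_β (e^{(ℏ/2)∂_γ} g)` where `γ = β − α` is
symmetric: `Σ_{a+b=N} (1/(2^a a!)) ∂_γ^a(C_b^α(f,g))
= Σ_{a+b+c=N} (1/(2^b b!))(1/(2^c c!)) C_a^β(∂_γ^b f, ∂_γ^c g)`. -/
theorem statement15 (d : ℕ) (hd : 1 ≤ d) (α β : Matrix (Fin d) (Fin d) ℂ)
    (hsym : (β - α).IsSymm) (f g : (Fin d → ℝ) → ℂ)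
    (hf : ContDiff ℝ (⊤ : ℕ∞) f) (hg : ContDiff ℝ (⊤ : ℕ∞) g)
    (hperf : IsPeriodic d f) (hperg : IsPeriodic d g) :
    ∀ (N : ℕ) (u : Fin d → ℝ),
      (∑ ab ∈ Finset.HasAntidiagonal.antidiagonal N,
          (1 / ((2 : ℂ) ^ ab.1 * (Nat.factorial ab.1 : ℂ))) *
            (dG d (β - α))^[ab.1] (CA d ab.2 α f g) u) =
        (∑ abc ∈ Finset.HasAntidiagonal.antidiagonal N, ∑ bc ∈ Finset.HasAntidiagonal.antidiagonal abc.2,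
          (1 / ((2 : ℂ) ^ bc.1 * (Nat.factorial bc.1 : ℂ))) *
            (1 / ((2 : ℂ) ^ bc.2 * (Nat.factorial bc.2 : ℂ))) *
            CA d abc.1 β ((dG d (β - α))^[bc.1] f) ((dG d (β - α))^[bc.2] g) u) := by
  intro N u
  classical
  set γ : Matrix (Fin d) (Fin d) ℂ := β - α with hγdef
  have hfS : Sm f := hf
  have hgS : Sm g := hg
  set x0 : V d := cmb (Finsupp.single 0 1) (Finsupp.single 0 1) with hx0
  have hfe : S15.evalW f (Finsupp.single 0 1) = f := by
    rw [evalW_single, mAlong_zero, one_smul]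
  have hge : S15.evalW g (Finsupp.single 0 1) = g := by
    rw [evalW_single, mAlong_zero, one_smul]
  have key := keyAlg (R := Module.End ℂ (V d)) (opF γ) (opG γ) (opP γ) (opP α)
    (commute_opF_opG γ γ) (commute_opF_opP γ γ) (commute_opF_opP γ α)
    (commute_opG_opP γ γ) (commute_opG_opP γ α) (commute_opP_opP γ α) N
  have hβ : opP α + opP γ = opP (d := d) β := by
    rw [← opP_add]
    congr 1
    rw [hγdef]
    abel
  have hL : ∀ ab : ℕ × ℕ,
      (1 / ((2:ℂ) ^ ab.1 * (ab.1.factorial : ℂ))) * (dG d γ)^[ab.1] (CA d ab.2 α f g) u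
      = S15.evalV f g
          (((((1 / ((2:ℂ) ^ ab.1 * (ab.1.factorial : ℂ))) * (1 / (ab.2.factorial : ℂ))) •
            (((opF γ + opG γ + (2:ℂ) • opP γ : Module.End ℂ (V d)) ^ ab.1)
              * ((opP α : Module.End ℂ (V d)) ^ ab.2))) : Module.End ℂ (V d)) x0) u := by
    intro ab
    conv_lhs => rw [← hfe, ← hge]
    rw [CA_evalW hfS hgS, dG_iter_evalV hfS hgS γ hsym]
    simp only [map_smul, LinearMap.smul_apply, Module.End.mul_apply, Pi.smul_apply,
      smul_eq_mul]
    ring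
  have hR : ∀ (abc bc : ℕ × ℕ),
      (1 / ((2:ℂ) ^ bc.1 * (bc.1.factorial : ℂ))) *
        (1 / ((2:ℂ) ^ bc.2 * (bc.2.factorial : ℂ))) *
        CA d abc.1 β ((dG d γ)^[bc.1] f) ((dG d γ)^[bc.2] g) u
      = S15.evalV f g
          (((((1 / (abc.1.factorial : ℂ)) * (1 / ((2:ℂ) ^ bc.1 * (bc.1.factorial : ℂ))) *
              (1 / ((2:ℂ) ^ bc.2 * (bc.2.factorial : ℂ)))) •
            (((opP α + opP γ : Module.End ℂ (V d)) ^ abc.1) *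
              (((opF γ : Module.End ℂ (V d)) ^ bc.1) *
                ((opG γ : Module.End ℂ (V d)) ^ bc.2)))) : Module.End ℂ (V d)) x0) u := by
    intro abc bc
    conv_lhs => rw [← hfe, ← hge]
    rw [dG_iter_evalW hfS γ, dG_iter_evalW hgS γ, CA_evalW hfS hgS, cmb_opD_pow, ← hβ]
    simp only [map_smul, LinearMap.smul_apply, Module.End.mul_apply, Pi.smul_apply,
      smul_eq_mul]
    ring
  have hpull : ∀ {ι : Type} (s : Finset ι) (T : ι → Module.End ℂ (V d)),
      S15.evalV f g ((∑ i ∈ s, T i) x0) u = ∑ i ∈ s, S15.evalV f g ((T i) x0) u := by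
    intro ι s T
    rw [LinearMap.sum_apply, map_sum, Finset.sum_apply]
  calc (∑ ab ∈ Finset.HasAntidiagonal.antidiagonal N,
          (1 / ((2 : ℂ) ^ ab.1 * (Nat.factorial ab.1 : ℂ))) *
            (dG d γ)^[ab.1] (CA d ab.2 α f g) u)
      = ∑ ab ∈ Finset.HasAntidiagonal.antidiagonal N, S15.evalV f g
          (((((1 / ((2:ℂ) ^ ab.1 * (ab.1.factorial : ℂ))) * (1 / (ab.2.factorial : ℂ))) •
            (((opF γ + opG γ + (2:ℂ) • opP γ : Module.End ℂ (V d)) ^ ab.1)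
              * ((opP α : Module.End ℂ (V d)) ^ ab.2))) : Module.End ℂ (V d)) x0) u :=
        Finset.sum_congr rfl fun ab _ => hL ab
    _ = S15.evalV f g ((∑ ab ∈ Finset.HasAntidiagonal.antidiagonal N,
          (((1 / ((2:ℂ) ^ ab.1 * (ab.1.factorial : ℂ))) * (1 / (ab.2.factorial : ℂ))) •
            (((opF γ + opG γ + (2:ℂ) • opP γ : Module.End ℂ (V d)) ^ ab.1)
              * ((opP α : Module.End ℂ (V d)) ^ ab.2)))) x0) u := (hpull _ _).symm
    _ = S15.evalV f g ((∑ abc ∈ Finset.HasAntidiagonal.antidiagonal N, ∑ bc ∈ Finset.HasAntidiagonal.antidiagonal abc.2,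
          (((1 / (abc.1.factorial : ℂ)) * (1 / ((2:ℂ) ^ bc.1 * (bc.1.factorial : ℂ))) *
              (1 / ((2:ℂ) ^ bc.2 * (bc.2.factorial : ℂ)))) •
            (((opP α + opP γ : Module.End ℂ (V d)) ^ abc.1) *
              (((opF γ : Module.End ℂ (V d)) ^ bc.1) *
                ((opG γ : Module.End ℂ (V d)) ^ bc.2))))) x0) u := by rw [key]
    _ = ∑ abc ∈ Finset.HasAntidiagonal.antidiagonal N, S15.evalV f g ((∑ bc ∈ Finset.HasAntidiagonal.antidiagonal abc.2,
          (((1 / (abc.1.factorial : ℂ)) * (1 / ((2:ℂ) ^ bc.1 * (bc.1.factorial : ℂ))) *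
              (1 / ((2:ℂ) ^ bc.2 * (bc.2.factorial : ℂ)))) •
            (((opP α + opP γ : Module.End ℂ (V d)) ^ abc.1) *
              (((opF γ : Module.End ℂ (V d)) ^ bc.1) *
                ((opG γ : Module.End ℂ (V d)) ^ bc.2))))) x0) u := hpull _ _
    _ = ∑ abc ∈ Finset.HasAntidiagonal.antidiagonal N, ∑ bc ∈ Finset.HasAntidiagonal.antidiagonal abc.2, S15.evalV f g
          ((((((1 / (abc.1.factorial : ℂ)) * (1 / ((2:ℂ) ^ bc.1 * (bc.1.factorial : ℂ))) *
              (1 / ((2:ℂ) ^ bc.2 * (bc.2.factorial : ℂ)))) •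
            (((opP α + opP γ : Module.End ℂ (V d)) ^ abc.1) *
              (((opF γ : Module.End ℂ (V d)) ^ bc.1) *
                ((opG γ : Module.End ℂ (V d)) ^ bc.2)))) : Module.End ℂ (V d)) x0)) u :=
        Finset.sum_congr rfl fun abc _ => hpull _ _
    _ = ∑ abc ∈ Finset.HasAntidiagonal.antidiagonal N, ∑ bc ∈ Finset.HasAntidiagonal.antidiagonal abc.2,
          (1 / ((2 : ℂ) ^ bc.1 * (Nat.factorial bc.1 : ℂ))) *
            (1 / ((2 : ℂ) ^ bc.2 * (Nat.factorial bc.2 : ℂ))) *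
            CA d abc.1 β ((dG d γ)^[bc.1] f) ((dG d γ)^[bc.2] g) u :=
        Finset.sum_congr rfl fun abc _ => Finset.sum_congr rfl fun bc _ => (hR abc bc).symm
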